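/- For Hermitian positive definite matrices A, B ∈ P_{d₁} and C, D ∈ P_{d₂}, the geometric mean tensorizes: (A # B) ⊗ (C # D) = (A ⊗ C) # (B ⊗ D). -/

import Mathlib

set_option linter.unusedSectionVars false

namespace CGO

open Matrix
open scoped ComplexOrder

variable {n : Type*} [Fintype n] [DecidableEq n]

/-- The Löwner partial order `A ⪯ B` on matrices: `B - A` is positive semidefinite. -/
def LoewnerLE (A B : Matrix n n ℂ) : Prop := (B - A).PosSemidef

lemma cfc_isHermitian {A : Matrix n n ℂ} (hA : A.IsHermitian) (f : ℝ → ℝ) :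
    (hA.cfc f).IsHermitian := by
  rw [Matrix.IsHermitian.cfc, Unitary.conjStarAlgAut_apply, Matrix.star_eq_conjTranspose]
  exact Matrix.isHermitian_mul_mul_conjTranspose _
    (Matrix.isHermitian_diagonal_of_self_adjoint _ (by
      show star _ = _
      funext i; simp [Function.comp]))

/-- Real powers of a Hermitian matrix, defined through the spectral theorem
(for positive definite `A`, this is the usual power `A^t`). -/
noncomputable def mpow {A : Matrix n n ℂ} (hA : A.IsHermitian) (t : ℝ) : Matrix n n ℂ :=
  hA.cfc (fun x => x ^ t)

lemma mpow_isHermitian {A : Matrix n n ℂ} (hA : A.IsHermitian) (t : ℝ) :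
    (mpow hA t).IsHermitian := cfc_isHermitian hA _

lemma mul_mul_isHermitian {A B : Matrix n n ℂ} (hA : A.IsHermitian) (hB : B.IsHermitian) :
    (A * B * A).IsHermitian := by
  have h := Matrix.isHermitian_mul_mul_conjTranspose A hB
  rwa [hA.eq] at h

/-- The weighted matrix geometric mean `A #ₜ B := A^{1/2} (A^{-1/2} B A^{-1/2})^t A^{1/2}`.
The midpoint `t = 1/2` is the matrix geometric mean `A # B`. -/
noncomputable def wgmean {A B : Matrix n n ℂ} (hA : A.PosDef) (hB : B.PosDef) (t : ℝ) :
    Matrix n n ℂ :=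
  mpow hA.1 (1/2) *
    mpow (mul_mul_isHermitian (mpow_isHermitian hA.1 (-(1/2))) hB.1) t *
    mpow hA.1 (1/2)

lemma wgmean_isHermitian {A B : Matrix n n ℂ} (hA : A.PosDef) (hB : B.PosDef) (t : ℝ) :
    (wgmean hA hB t).IsHermitian := by
  have h := mul_mul_isHermitian (mpow_isHermitian hA.1 (1/2))
    (mpow_isHermitian (mul_mul_isHermitian (mpow_isHermitian hA.1 (-(1/2))) hB.1) t)
  simpa [wgmean, mul_assoc] using h

section Aux

variable {n : Type*} [Fintype n] [DecidableEq n]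

lemma cfc_mul' {A : Matrix n n ℂ} (hA : A.IsHermitian) (f g : ℝ → ℝ) :
    hA.cfc f * hA.cfc g = hA.cfc (fun x => f x * g x) := by
  have hU : (star (hA.eigenvectorUnitary : Matrix n n ℂ)) *
      (hA.eigenvectorUnitary : Matrix n n ℂ) = 1 :=
    Matrix.UnitaryGroup.star_mul_self _
  simp only [Matrix.IsHermitian.cfc, Unitary.conjStarAlgAut_apply]
  simp only [mul_assoc]
  rw [← mul_assoc (star _), hU, one_mul, ← mul_assoc (Matrix.diagonal _),
    Matrix.diagonal_mul_diagonal]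
  have : (fun i => (((RCLike.ofReal : ℝ → ℂ) ∘ f ∘ hA.eigenvalues) i) *
        (((RCLike.ofReal : ℝ → ℂ) ∘ g ∘ hA.eigenvalues) i))
      = (RCLike.ofReal : ℝ → ℂ) ∘ (fun x => f x * g x) ∘ hA.eigenvalues := by
    funext i; simp
  rw [this]

lemma cfc_congr' {A : Matrix n n ℂ} (hA : A.IsHermitian) {f g : ℝ → ℝ}
    (h : ∀ i, f (hA.eigenvalues i) = g (hA.eigenvalues i)) : hA.cfc f = hA.cfc g := by
  simp only [Matrix.IsHermitian.cfc]
  have : (RCLike.ofReal : ℝ → ℂ) ∘ f ∘ hA.eigenvalues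
      = (RCLike.ofReal : ℝ → ℂ) ∘ g ∘ hA.eigenvalues := by
    funext i; simp [h i]
  rw [this]

lemma cfc_one' {A : Matrix n n ℂ} (hA : A.IsHermitian) : hA.cfc (fun _ => 1) = 1 := by
  have hU : (hA.eigenvectorUnitary : Matrix n n ℂ) *
      (star (hA.eigenvectorUnitary : Matrix n n ℂ)) = 1 :=
    hA.eigenvectorUnitary.2.2
  simp only [Matrix.IsHermitian.cfc]
  have : Matrix.diagonal ((RCLike.ofReal : ℝ → ℂ) ∘ (fun _ => (1:ℝ)) ∘ hA.eigenvalues) = 1 := by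
    simp [Function.comp_def]
  rw [this, map_one]

lemma mpow_congr {A B : Matrix n n ℂ} (h : A = B) (hA : A.IsHermitian) (hB : B.IsHermitian)
    (t : ℝ) : mpow hA t = mpow hB t := by subst h; rfl

open scoped MatrixOrder in
/-- Square root of a positive semidefinite matrix (ported: via `CFC.sqrt`). -/
noncomputable def _root_.Matrix.PosSemidef.sqrt {A : Matrix n n ℂ} (_hA : A.PosSemidef) :
    Matrix n n ℂ := CFC.sqrt A

open scoped MatrixOrder in
lemma _root_.Matrix.PosSemidef.posSemidef_sqrt {A : Matrix n n ℂ} (hA : A.PosSemidef) :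
    hA.sqrt.PosSemidef := (CFC.sqrt_nonneg A).posSemidef

open scoped MatrixOrder in
lemma _root_.Matrix.PosSemidef.sqrt_mul_self {A : Matrix n n ℂ} (hA : A.PosSemidef) :
    hA.sqrt * hA.sqrt = A := CFC.sqrt_mul_sqrt_self A hA.nonneg

open scoped MatrixOrder in
lemma _root_.Matrix.PosSemidef.eq_sqrt_of_sq_eq {A B : Matrix n n ℂ} (hA : A.PosSemidef)
    (hB : B.PosSemidef) (hAB : A ^ 2 = B) : A = hB.sqrt := by
  unfold Matrix.PosSemidef.sqrt
  rw [eq_comm, CFC.sqrt_eq_iff _ _ hB.nonneg hA.nonneg, ← hAB, sq]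

open scoped MatrixOrder in
lemma mpow_half_eq_sqrt {A : Matrix n n ℂ} (hA : A.PosSemidef) :
    mpow hA.1 (1/2) = hA.sqrt := by
  rw [mpow, Matrix.PosSemidef.sqrt, CFC.sqrt_eq_cfc, cfc_nnreal_eq_real _ A, hA.1.cfc_eq]
  exact cfc_congr' hA.1 (fun i => by
    simp [Real.sqrt_eq_rpow, Real.coe_toNNReal', max_eq_left (hA.eigenvalues_nonneg i)])

lemma sqrt_mul_mpow_neghalf {A : Matrix n n ℂ} (hA : A.PosDef) :
    hA.posSemidef.sqrt * mpow hA.1 (-(1/2)) = 1 := by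
  rw [← mpow_half_eq_sqrt hA.posSemidef, mpow, mpow, cfc_mul']
  rw [cfc_congr' hA.1 (g := fun _ => 1) (fun i => by
    rw [← Real.rpow_add (hA.eigenvalues_pos i)]; norm_num)]
  exact cfc_one' hA.1

lemma mpow_neghalf_eq_inv_sqrt {A : Matrix n n ℂ} (hA : A.PosDef) :
    mpow hA.1 (-(1/2)) = hA.posSemidef.sqrt⁻¹ :=
  (Matrix.inv_eq_right_inv (sqrt_mul_mpow_neghalf hA)).symm

open Kronecker in
lemma kron_conjTranspose' {m : Type*} [Fintype m] [DecidableEq m]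
    (A : Matrix n n ℂ) (B : Matrix m m ℂ) : (A ⊗ₖ B)ᴴ = Aᴴ ⊗ₖ Bᴴ := by
  ext ⟨i, j⟩ ⟨k, l⟩
  simp [Matrix.conjTranspose_apply]

open Kronecker in
lemma kron_posSemidef {m : Type*} [Fintype m] [DecidableEq m]
    {S : Matrix n n ℂ} {T : Matrix m m ℂ} (hS : S.PosSemidef) (hT : T.PosSemidef) :
    (S ⊗ₖ T).PosSemidef := by
  have : S ⊗ₖ T = (hS.sqrt ⊗ₖ hT.sqrt)ᴴ * (hS.sqrt ⊗ₖ hT.sqrt) := by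
    rw [kron_conjTranspose', hS.posSemidef_sqrt.1.eq, hT.posSemidef_sqrt.1.eq,
      ← Matrix.mul_kronecker_mul, hS.sqrt_mul_self, hT.sqrt_mul_self]
  rw [this]
  exact Matrix.posSemidef_conjTranspose_mul_self _

open Kronecker in
lemma sqrt_kron {m : Type*} [Fintype m] [DecidableEq m]
    {S : Matrix n n ℂ} {T : Matrix m m ℂ} (hS : S.PosSemidef) (hT : T.PosSemidef)
    (hST : (S ⊗ₖ T).PosSemidef) : hST.sqrt = hS.sqrt ⊗ₖ hT.sqrt :=
  ((kron_posSemidef hS.posSemidef_sqrt hT.posSemidef_sqrt).eq_sqrt_of_sq_eq hST (by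
    rw [pow_two, ← Matrix.mul_kronecker_mul, hS.sqrt_mul_self, hT.sqrt_mul_self])).symm

end Aux

open Kronecker in
/-- The geometric mean tensorizes:
`(A # B) ⊗ (C # D) = (A ⊗ C) # (B ⊗ D)`. -/
theorem gmean_kronecker {m : Type*} [Fintype m] [DecidableEq m]
    {A B : Matrix n n ℂ} {C D : Matrix m m ℂ}
    (hA : A.PosDef) (hB : B.PosDef) (hC : C.PosDef) (hD : D.PosDef)
    (hAC : (A ⊗ₖ C).PosDef) (hBD : (B ⊗ₖ D).PosDef) :
    wgmean hA hB (1/2) ⊗ₖ wgmean hC hD (1/2) = wgmean hAC hBD (1/2) := by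
  have hM1 : (hA.posSemidef.sqrt⁻¹ * B * hA.posSemidef.sqrt⁻¹).PosSemidef := by
    have h := hB.posSemidef.mul_mul_conjTranspose_same hA.posSemidef.sqrt⁻¹
    rwa [(hA.posSemidef.posSemidef_sqrt.1.inv).eq] at h
  have hM2 : (hC.posSemidef.sqrt⁻¹ * D * hC.posSemidef.sqrt⁻¹).PosSemidef := by
    have h := hD.posSemidef.mul_mul_conjTranspose_same hC.posSemidef.sqrt⁻¹
    rwa [(hC.posSemidef.posSemidef_sqrt.1.inv).eq] at h
  have hM12 : ((hA.posSemidef.sqrt⁻¹ * B * hA.posSemidef.sqrt⁻¹) ⊗ₖ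
      (hC.posSemidef.sqrt⁻¹ * D * hC.posSemidef.sqrt⁻¹)).PosSemidef := kron_posSemidef hM1 hM2
  -- sqrt of A ⊗ C
  have hsqAC : hAC.posSemidef.sqrt = hA.posSemidef.sqrt ⊗ₖ hC.posSemidef.sqrt :=
    sqrt_kron hA.posSemidef hC.posSemidef hAC.posSemidef
  have hS1 : mpow hAC.1 (1/2) = hA.posSemidef.sqrt ⊗ₖ hC.posSemidef.sqrt := by
    rw [mpow_half_eq_sqrt hAC.posSemidef, hsqAC]
  have hS2 : mpow hAC.1 (-(1/2)) = hA.posSemidef.sqrt⁻¹ ⊗ₖ hC.posSemidef.sqrt⁻¹ := by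
    rw [mpow_neghalf_eq_inv_sqrt hAC, hsqAC, Matrix.inv_kronecker]
  have hmid : mpow hAC.1 (-(1/2)) * (B ⊗ₖ D) * mpow hAC.1 (-(1/2)) =
      (hA.posSemidef.sqrt⁻¹ * B * hA.posSemidef.sqrt⁻¹) ⊗ₖ
      (hC.posSemidef.sqrt⁻¹ * D * hC.posSemidef.sqrt⁻¹) := by
    rw [hS2, ← Matrix.mul_kronecker_mul, ← Matrix.mul_kronecker_mul]
  rw [wgmean, wgmean, wgmean,
    mpow_congr hmid _ hM12.1 (1/2),
    mpow_congr (show mpow hA.1 (-(1/2)) * B * mpow hA.1 (-(1/2)) =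
      hA.posSemidef.sqrt⁻¹ * B * hA.posSemidef.sqrt⁻¹ by
        rw [mpow_neghalf_eq_inv_sqrt hA]) _ hM1.1 (1/2),
    mpow_congr (show mpow hC.1 (-(1/2)) * D * mpow hC.1 (-(1/2)) =
      hC.posSemidef.sqrt⁻¹ * D * hC.posSemidef.sqrt⁻¹ by
        rw [mpow_neghalf_eq_inv_sqrt hC]) _ hM2.1 (1/2),
    hS1, mpow_half_eq_sqrt hA.posSemidef, mpow_half_eq_sqrt hC.posSemidef,
    mpow_half_eq_sqrt hM1, mpow_half_eq_sqrt hM2, mpow_half_eq_sqrt hM12,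
    sqrt_kron hM1 hM2 hM12, ← Matrix.mul_kronecker_mul, ← Matrix.mul_kronecker_mul]


end CGO
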